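/- Let φ be a CNF instance over variables X, let X_b ⊆ X, and let β = 2·|X \ X_b|. Let φ' be the CNF instance obtained from φ by adding, for each x ∈ X_b, fresh variables x^1,…,x^β and the 2β clauses {x, ¬x^i} and {¬x, x^i} for 1 ≤ i ≤ β. Then: (i) the satisfying literal sets of φ' are exactly the sets A ∪ {x^i : x ∈ A ∩ X_b, 1 ≤ i ≤ β} ∪ {¬x^i : ¬x ∈ A, x ∈ X_b, 1 ≤ i ≤ β} for A a satisfying literal set of φ (in particular φ' is satisfiable iff φ is); and (ii) for all satisfying literal sets S_1, S_2 of φ': S_1 and S_2 contain the same literals over variables in X_b if and only if |S_1 △ S_2| ≤ β, where △ denotes symmetric difference. -/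

import Mathlib

/-- Variables of the blown-up CNF instance `φ'`: the original variables `X` together with
fresh variables `x^1, …, x^β` for every `x ∈ X_b`. -/
abbrev BVar (X : Type*) (Xb : Finset X) (β : ℕ) := X ⊕ ({x : X // x ∈ Xb} × Fin β)

/-- `A` is a satisfying literal set of the CNF instance with clause set `Φ` over the
variable type `V`: it contains exactly one of `x, ¬x` for each variable `x` and at least
one literal of each clause. -/
def SatAssign {V : Type*} (Φ : Set (Set (V × Bool))) (A : Set (V × Bool)) : Prop :=
  (∀ v : V, Xor' ((v, true) ∈ A) ((v, false) ∈ A)) ∧ ∀ c ∈ Φ, ∃ ℓ ∈ c, ℓ ∈ A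

/-- The embedding of literals over `X` into literals over the blown-up variable set. -/
def liftLit {X : Type*} {Xb : Finset X} {β : ℕ} (p : X × Bool) : BVar X Xb β × Bool :=
  (Sum.inl p.1, p.2)

/-- The clauses of `φ'`: the clauses of `φ` (with literals embedded), together with the
`2β` clauses `{x, ¬x^i}` and `{¬x, x^i}` for every `x ∈ X_b` and `1 ≤ i ≤ β`. -/
def blowCNF {X : Type*} (Xb : Finset X) (β : ℕ) (Φ : Set (Set (X × Bool))) :
    Set (Set (BVar X Xb β × Bool)) :=
  {c' | (∃ c ∈ Φ, c' = liftLit '' c) ∨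
        (∃ (x : {x : X // x ∈ Xb}) (i : Fin β),
          c' = {(Sum.inl x.1, true), (Sum.inr (x, i), false)} ∨
          c' = {(Sum.inl x.1, false), (Sum.inr (x, i), true)})}

/-- The satisfying literal set of `φ'` induced by a satisfying literal set `A` of `φ`:
`A ∪ {x^i : x ∈ A ∩ X_b, 1 ≤ i ≤ β} ∪ {¬x^i : ¬x ∈ A, x ∈ X_b, 1 ≤ i ≤ β}`. -/
def blowAssign {X : Type*} (Xb : Finset X) (β : ℕ) (A : Set (X × Bool)) :
    Set (BVar X Xb β × Bool) :=
  liftLit '' A ∪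
    {p | ∃ (x : {x : X // x ∈ Xb}) (i : Fin β), p.1 = Sum.inr (x, i) ∧ (x.1, p.2) ∈ A}

section Aux

variable {X : Type*} {Xb : Finset X} {β : ℕ} {Φ : Set (Set (X × Bool))}

lemma mem_blowAssign_inl {A : Set (X × Bool)} {v : X} {b : Bool} :
    ((Sum.inl v, b) : BVar X Xb β × Bool) ∈ blowAssign Xb β A ↔ (v, b) ∈ A := by
  constructor
  · rintro (⟨⟨u, c⟩, hu, heq⟩ | ⟨x, i, h, -⟩)
    · simp only [liftLit, Prod.mk.injEq, Sum.inl.injEq] at heq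
      obtain ⟨h1, h2⟩ := heq; subst h1; subst h2; exact hu
    · simp at h
  · intro h; exact Or.inl ⟨(v, b), h, rfl⟩

lemma mem_blowAssign_inr {A : Set (X × Bool)} {x : {x : X // x ∈ Xb}} {i : Fin β} {b : Bool} :
    ((Sum.inr (x, i), b) : BVar X Xb β × Bool) ∈ blowAssign Xb β A ↔ (x.1, b) ∈ A := by
  constructor
  · rintro (⟨⟨u, c⟩, hu, heq⟩ | ⟨x', i', h, hA⟩)
    · simp [liftLit] at heq
    · simp only [Sum.inr.injEq, Prod.mk.injEq] at h
      obtain ⟨h1, h2⟩ := h; subst h1; exact hA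
  · intro h; exact Or.inr ⟨x, i, rfl, h⟩

lemma copy_of_sat {S : Set (BVar X Xb β × Bool)} (hS : SatAssign (blowCNF Xb β Φ) S)
    (x : {x : X // x ∈ Xb}) (i : Fin β) (b : Bool) :
    ((Sum.inr (x, i), b) : BVar X Xb β × Bool) ∈ S ↔ ((Sum.inl x.1, b) : BVar X Xb β × Bool) ∈ S := by
  have h1 := hS.1 (Sum.inl x.1)
  have h2 := hS.1 (Sum.inr (x, i))
  have hc1 := hS.2 _ (Or.inr ⟨x, i, Or.inl rfl⟩)
  have hc2 := hS.2 _ (Or.inr ⟨x, i, Or.inr rfl⟩)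
  simp only [Set.mem_insert_iff, Set.mem_singleton_iff, exists_eq_or_imp, exists_eq_left] at hc1 hc2
  rw [Xor'] at h1 h2
  unfold Xor at h1 h2
  cases b <;> tauto

lemma sat_blow_iff {A' : Set (BVar X Xb β × Bool)} :
    SatAssign (blowCNF Xb β Φ) A' ↔ ∃ A, SatAssign Φ A ∧ A' = blowAssign Xb β A := by
  constructor
  · intro hA'
    refine ⟨{p | liftLit p ∈ A'}, ⟨fun v => hA'.1 (Sum.inl v), ?_⟩, ?_⟩
    · intro c hc
      obtain ⟨ℓ', hℓ'c, hℓ'A⟩ := hA'.2 _ (Or.inl ⟨c, hc, rfl⟩)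
      obtain ⟨ℓ, hℓ, rfl⟩ := hℓ'c
      exact ⟨ℓ, hℓ, hℓ'A⟩
    · ext ⟨w, b⟩
      rcases w with v | ⟨x, i⟩
      · rw [mem_blowAssign_inl]; exact Iff.rfl
      · rw [mem_blowAssign_inr, copy_of_sat hA' x i b]; exact Iff.rfl
  · rintro ⟨A, hA, rfl⟩
    constructor
    · rintro (v | ⟨x, i⟩)
      · have h := hA.1 v
        rw [Xor'] at h ⊢
        simp only [mem_blowAssign_inl]
        exact h
      · have h := hA.1 x.1
        rw [Xor'] at h ⊢
        simp only [mem_blowAssign_inr]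
        exact h
    · rintro c (⟨c₀, hc₀, rfl⟩ | ⟨x, i, rfl | rfl⟩)
      · obtain ⟨ℓ, hℓ, hℓA⟩ := hA.2 c₀ hc₀
        exact ⟨liftLit ℓ, ⟨ℓ, hℓ, rfl⟩, Or.inl ⟨ℓ, hℓA, rfl⟩⟩
      · have h := hA.1 x.1
        rw [Xor'] at h
        rcases h with ⟨ht, -⟩ | ⟨hf, -⟩
        · exact ⟨_, Set.mem_insert _ _, mem_blowAssign_inl.mpr ht⟩
        · exact ⟨_, Set.mem_insert_iff.mpr (Or.inr rfl), mem_blowAssign_inr.mpr hf⟩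
      · have h := hA.1 x.1
        rw [Xor'] at h
        rcases h with ⟨ht, -⟩ | ⟨hf, -⟩
        · exact ⟨_, Set.mem_insert_iff.mpr (Or.inr rfl), mem_blowAssign_inr.mpr ht⟩
        · exact ⟨_, Set.mem_insert _ _, mem_blowAssign_inl.mpr hf⟩

end Aux
/-- with `β = 2·|X \ X_b|`:
(i) the satisfying literal sets of `φ'` are exactly the blow-ups of the satisfying literal
sets of `φ` (in particular `φ'` is satisfiable iff `φ` is); and
(ii) two satisfying literal sets of `φ'` contain the same literals over the variables of
`X_b` iff `|S₁ ∆ S₂| ≤ β`. -/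
theorem stmt_18 {X : Type*} [Fintype X] [DecidableEq X] (Xb : Finset X)
    (Φ : Set (Set (X × Bool))) (β : ℕ) (hβ : β = 2 * (Finset.univ \ Xb).card) :
    ({A' : Set (BVar X Xb β × Bool) | SatAssign (blowCNF Xb β Φ) A'}
      = {A' | ∃ A, SatAssign Φ A ∧ A' = blowAssign Xb β A}) ∧
    ((∃ A', SatAssign (blowCNF Xb β Φ) A') ↔ ∃ A, SatAssign Φ A) ∧
    (∀ S₁ S₂ : Set (BVar X Xb β × Bool),
      SatAssign (blowCNF Xb β Φ) S₁ → SatAssign (blowCNF Xb β Φ) S₂ →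
      (S₁ ∩ {p | ∃ x ∈ Xb, p.1 = Sum.inl x} = S₂ ∩ {p | ∃ x ∈ Xb, p.1 = Sum.inl x}
        ↔ (symmDiff S₁ S₂).ncard ≤ β)) := by
  refine ⟨?_, ?_, ?_⟩
  · ext A'
    simpa only [Set.mem_setOf_eq] using (sat_blow_iff (Xb := Xb) (β := β) (Φ := Φ) (A' := A'))
  · constructor
    · rintro ⟨A', hA'⟩
      obtain ⟨A, hA, -⟩ := sat_blow_iff.mp hA'
      exact ⟨A, hA⟩
    · rintro ⟨A, hA⟩
      exact ⟨blowAssign Xb β A, sat_blow_iff.mpr ⟨A, hA, rfl⟩⟩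
  · intro S₁ S₂ h₁ h₂
    constructor
    · intro hagree
      have key : ∀ (v : X), v ∈ Xb → ∀ b : Bool,
          (((Sum.inl v, b) : BVar X Xb β × Bool) ∈ S₁ ↔ ((Sum.inl v, b) : BVar X Xb β × Bool) ∈ S₂) := by
        intro v hv b
        have h := Set.ext_iff.mp hagree (Sum.inl v, b)
        simp only [Set.mem_inter_iff, Set.mem_setOf_eq] at h
        constructor
        · intro hm; exact (h.mp ⟨hm, v, hv, rfl⟩).1
        · intro hm; exact (h.mpr ⟨hm, v, hv, rfl⟩).1
      have hsub : symmDiff S₁ S₂ ⊆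
          {p : BVar X Xb β × Bool | ∃ v, v ∉ Xb ∧ p.1 = Sum.inl v} := by
        rintro ⟨w, b⟩ hp
        rw [Set.mem_symmDiff] at hp
        rcases w with v | ⟨x, i⟩
        · refine ⟨v, ?_, rfl⟩
          intro hv
          have := key v hv b
          tauto
        · exfalso
          have e1 := copy_of_sat h₁ x i b
          have e2 := copy_of_sat h₂ x i b
          have := key x.1 x.2 b
          tauto
      have hT : {p : BVar X Xb β × Bool | ∃ v, v ∉ Xb ∧ p.1 = Sum.inl v}.ncard = β := by
        have hinj : Function.Injective
            (fun q : X × Bool => ((Sum.inl q.1 : BVar X Xb β), q.2)) := by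
          intro ⟨a, c⟩ ⟨a', c'⟩ h
          simp only [Prod.mk.injEq, Sum.inl.injEq] at h
          exact Prod.ext h.1 h.2
        have himg : {p : BVar X Xb β × Bool | ∃ v, v ∉ Xb ∧ p.1 = Sum.inl v}
            = (fun q : X × Bool => ((Sum.inl q.1 : BVar X Xb β), q.2)) '' {q | q.1 ∉ Xb} := by
          ext ⟨w, b⟩
          constructor
          · rintro ⟨v, hv, heq⟩
            simp only at heq
            subst heq
            exact ⟨(v, b), hv, rfl⟩
          · rintro ⟨⟨a, c⟩, ha, heq⟩
            simp only [Prod.mk.injEq] at heq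
            exact ⟨a, ha, heq.1.symm⟩
        have hset : {q : X × Bool | q.1 ∉ Xb}
            = ↑(((Finset.univ \ Xb) ×ˢ Finset.univ : Finset (X × Bool))) := by
          ext ⟨a, c⟩
          simp [Finset.mem_sdiff, Finset.mem_product]
        rw [himg, Set.ncard_image_of_injective _ hinj, hset, Set.ncard_coe_finset,
          Finset.card_product, hβ]
        simp [Finset.card_univ]
        ring
      calc (symmDiff S₁ S₂).ncard
          ≤ _ := Set.ncard_le_ncard hsub (Set.toFinite _)
        _ = β := hT
    · intro hcard
      by_contra hne
      simp only [Set.ext_iff, not_forall] at hne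
      obtain ⟨p, hp⟩ := hne
      simp only [Set.mem_inter_iff, Set.mem_setOf_eq] at hp
      have hP : ∃ x ∈ Xb, p.1 = Sum.inl x := by
        by_contra hnp
        exact hp (by constructor <;> rintro ⟨-, h'⟩ <;> exact absurd h' hnp)
      have hdis : ¬(p ∈ S₁ ↔ p ∈ S₂) := by
        intro h
        exact hp (by constructor <;> rintro ⟨h1, h2⟩ <;> exact ⟨by tauto, h2⟩)
      obtain ⟨x, hx, hx1⟩ := hP
      obtain ⟨w, b⟩ := p
      simp only at hx1
      subst hx1
      set D : Set (BVar X Xb β × Bool) :=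
        insert ((Sum.inl x : BVar X Xb β), b)
          ((fun i : Fin β => ((Sum.inr (⟨x, hx⟩, i) : BVar X Xb β), b)) '' Set.univ) with hD
      have hDsub : D ⊆ symmDiff S₁ S₂ := by
        rintro q (rfl | ⟨i, -, rfl⟩)
        · rw [Set.mem_symmDiff]; tauto
        · rw [Set.mem_symmDiff]
          have e1 := copy_of_sat h₁ ⟨x, hx⟩ i b
          have e2 := copy_of_sat h₂ ⟨x, hx⟩ i b
          tauto
      have hinj : Function.Injective
          (fun i : Fin β => ((Sum.inr (⟨x, hx⟩, i) : BVar X Xb β), b)) := by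
        intro i j h
        simp only [Prod.mk.injEq, Sum.inr.injEq, Prod.mk.injEq, true_and] at h
        exact h.1
      have hDcard : D.ncard = β + 1 := by
        rw [hD, Set.ncard_insert_of_notMem (by simp) (Set.toFinite _),
          Set.ncard_image_of_injective _ hinj, Set.ncard_univ]
        simp
      have := Set.ncard_le_ncard hDsub (Set.toFinite _)
      omega
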